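/- For every continuous function f : [-1,1] → ℝ, lim_{α → (-1/2)⁺} ∫_{[-1,1]} f(u) dΠ_α(u) = (f(-1) + f(1))/2; that is, as α decreases to -1/2, the probability measures dΠ_α converge weakly to dΠ_{-1/2} = (δ_{-1}+δ_{1})/2. -/

import Mathlib

open MeasureTheory Real Set
open scoped ENNReal Classical

noncomputable def cab (α β : ℝ) : ℝ :=
  Real.Gamma (α + β + 2) / (2 ^ (α + β + 1) * Real.Gamma (α + 1) * Real.Gamma (β + 1))

noncomputable def F4 (a₁ a₂ b₁ b₂ x y : ℝ) : ℝ :=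
  ∑' p : ℕ × ℕ,
    (Polynomial.eval a₁ (ascPochhammer ℝ (p.1 + p.2)) *
      Polynomial.eval a₂ (ascPochhammer ℝ (p.1 + p.2))) /
    (Polynomial.eval b₁ (ascPochhammer ℝ p.1) * Polynomial.eval b₂ (ascPochhammer ℝ p.2) *
      (Nat.factorial p.1) * (Nat.factorial p.2)) * x ^ p.1 * y ^ p.2

noncomputable def Hker (α β t θ φ : ℝ) : ℝ :=
  cab α β * Real.sinh (t / 2) / Real.cosh (t / 2) ^ (α + β + 2) *
    F4 ((α + β + 2) / 2) ((α + β + 3) / 2) (α + 1) (β + 1)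
      ((Real.sin (θ / 2) * Real.sin (φ / 2) / Real.cosh (t / 2)) ^ 2)
      ((Real.cos (θ / 2) * Real.cos (φ / 2) / Real.cosh (t / 2)) ^ 2)

noncomputable def qf (θ φ u v : ℝ) : ℝ :=
  1 - u * Real.sin (θ / 2) * Real.sin (φ / 2) - v * Real.cos (θ / 2) * Real.cos (φ / 2)

noncomputable def Psi (α β t θ φ u v : ℝ) : ℝ :=
  cab α β * Real.sinh (t / 2) / (Real.cosh (t / 2) - 1 + qf θ φ u v) ^ (α + β + 2)

noncomputable def PsiE (α β t θ φ u v : ℝ) : ℝ :=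
  (Psi α β t θ φ u v + Psi α β t θ φ (-u) v + Psi α β t θ φ u (-v) +
    Psi α β t θ φ (-u) (-v)) / 4

noncomputable def PiMeas (ν : ℝ) : Measure ℝ :=
  if ν = -(1/2) then (2⁻¹ : ℝ≥0∞) • (Measure.dirac (-1) + Measure.dirac 1)
  else (volume.restrict (Icc (-1 : ℝ) 1)).withDensity
    (fun u => ENNReal.ofReal
      (Real.Gamma (ν + 1) / (Real.sqrt π * Real.Gamma (ν + 1/2)) * (1 - u ^ 2) ^ (ν - 1/2)))

noncomputable def PiFun (γ u : ℝ) : ℝ :=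
  Real.Gamma (γ + 1) / (Real.sqrt π * Real.Gamma (γ + 1/2)) *
    ∫ w in (0 : ℝ)..u, (1 - w ^ 2) ^ (γ - 1/2)

noncomputable def PiInt (ν : ℝ) (S : Set ℝ) (f : ℝ → ℝ) : ℝ :=
  if ν = -(1/2) then
    ((if (-1 : ℝ) ∈ S then f (-1) else 0) + (if (1 : ℝ) ∈ S then f 1 else 0)) / 2
  else ∫ u in S, f u *
    (Real.Gamma (ν + 1) / (Real.sqrt π * Real.Gamma (ν + 1/2)) * (1 - u ^ 2) ^ (ν - 1/2))

noncomputable def muab (α β : ℝ) : Measure ℝ :=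
  (volume.restrict (Icc (0 : ℝ) π)).withDensity
    (fun θ => ENNReal.ofReal (Real.sin (θ / 2) ^ (2 * α + 1) * Real.cos (θ / 2) ^ (2 * β + 1)))

def ballI (θ r : ℝ) : Set ℝ := Ioo (θ - r) (θ + r) ∩ Icc 0 π

section AuxWeakConv

open Filter

noncomputable def cA (α : ℝ) : ℝ := Real.Gamma (α + 1) / (Real.sqrt π * Real.Gamma (α + 1/2))
noncomputable def rhoA (α u : ℝ) : ℝ := cA α * (1 - u^2) ^ (α - 1/2)

lemma beta_eq_on {a b : ℝ} {x : ℝ} (hx : 0 ≤ x) (hx1 : x ≤ 1) :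
    (x : ℂ) ^ ((a : ℂ) - 1) * ((1 : ℂ) - x) ^ ((b : ℂ) - 1)
      = ((x ^ (a - 1) * (1 - x) ^ (b - 1) : ℝ) : ℂ) := by
  have h1 : ((a : ℂ) - 1) = ((a - 1 : ℝ) : ℂ) := by push_cast; ring
  have h2 : ((b : ℂ) - 1) = ((b - 1 : ℝ) : ℂ) := by push_cast; ring
  have h3 : ((1 : ℂ) - (x : ℂ)) = ((1 - x : ℝ) : ℂ) := by push_cast; ring
  rw [h1, h2, h3, ← Complex.ofReal_cpow hx, ← Complex.ofReal_cpow (by linarith),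
    ← Complex.ofReal_mul]

lemma betaInt_integrable {a b : ℝ} (ha : 0 < a) (hb : 0 < b) :
    IntervalIntegrable (fun x : ℝ => x ^ (a - 1) * (1 - x) ^ (b - 1)) volume 0 1 := by
  have h := Complex.betaIntegral_convergent (u := (a : ℂ)) (v := (b : ℂ)) (by simpa) (by simpa)
  have h2 : IntervalIntegrable (fun x : ℝ =>
      ((x : ℂ) ^ ((a : ℂ) - 1) * ((1 : ℂ) - x) ^ ((b : ℂ) - 1)).re) volume 0 1 :=
    ⟨h.1.re, h.2.re⟩
  rw [intervalIntegrable_iff] at h2 ⊢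
  refine h2.congr_fun (fun x hx => ?_) measurableSet_uIoc
  rw [Set.uIoc_of_le (by norm_num : (0:ℝ) ≤ 1)] at hx
  dsimp only
  rw [beta_eq_on hx.1.le hx.2, Complex.ofReal_re]

lemma betaInt {a b : ℝ} (ha : 0 < a) (hb : 0 < b) :
    ∫ x in (0:ℝ)..1, x ^ (a - 1) * (1 - x) ^ (b - 1)
      = Real.Gamma a * Real.Gamma b / Real.Gamma (a + b) := by
  have key := Complex.Gamma_mul_Gamma_eq_betaIntegral (s := (a : ℂ)) (t := (b : ℂ))
    (by simpa) (by simpa)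
  have hofReal : (Complex.betaIntegral a b)
      = ((∫ x in (0:ℝ)..1, x ^ (a - 1) * (1 - x) ^ (b - 1) : ℝ) : ℂ) := by
    rw [Complex.betaIntegral, ← intervalIntegral.integral_ofReal]
    refine intervalIntegral.integral_congr (fun x hx => ?_)
    rw [Set.uIcc_of_le (by norm_num : (0:ℝ) ≤ 1)] at hx
    exact beta_eq_on hx.1 hx.2
  rw [hofReal, ← Complex.ofReal_add, Complex.Gamma_ofReal, Complex.Gamma_ofReal,
    Complex.Gamma_ofReal, ← Complex.ofReal_mul, ← Complex.ofReal_mul] at key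
  have := Complex.ofReal_injective key
  have hpos : Real.Gamma (a + b) > 0 := Real.Gamma_pos_of_pos (by linarith)
  field_simp
  linarith [this]

lemma w_subst {r : ℝ} : ∫ u in (-1:ℝ)..1, (1 - u^2) ^ r
    = 2 * ((4:ℝ) ^ r * ∫ x in (0:ℝ)..1, x ^ r * (1 - x) ^ r) := by
  have h := intervalIntegral.integral_comp_mul_add (a := (0:ℝ)) (b := 1)
    (f := fun u : ℝ => (1 - u^2) ^ r) (c := 2) (two_ne_zero) (-1)
  norm_num at h
  have h' : (∫ u in (-1:ℝ)..1, (1 - u^2) ^ r)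
      = 2 * ∫ x in (0:ℝ)..1, (1 - (2*x + -1)^2) ^ r := by rw [h]; ring
  rw [h']
  congr 1
  rw [← intervalIntegral.integral_const_mul ((4:ℝ)^r) (fun x : ℝ => x ^ r * (1-x) ^ r)]
  refine intervalIntegral.integral_congr (fun x hx => ?_)
  rw [Set.uIcc_of_le (by norm_num : (0:ℝ) ≤ 1)] at hx
  have h1 : 1 - (2 * x + -1)^2 = (4 * x) * (1 - x) := by ring
  rw [h1, Real.mul_rpow (by linarith [hx.1]) (by linarith [hx.2]),
    Real.mul_rpow (by norm_num) hx.1]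
  ring

lemma w_integrable {r : ℝ} (hr : -1 < r) :
    IntervalIntegrable (fun u : ℝ => (1 - u^2) ^ r) volume (-1) 1 := by
  have h0 : (0:ℝ) < r + 1 := by linarith
  have h := betaInt_integrable (a := r+1) (b := r+1) h0 h0
  simp only [add_sub_cancel_right] at h
  have h2 := h.comp_mul_right (c := (2⁻¹ : ℝ))
  norm_num at h2
  have h3 := h2.comp_add_right 1
  norm_num at h3
  rw [intervalIntegrable_iff] at h3 ⊢
  refine MeasureTheory.IntegrableOn.congr_fun (h3.const_mul ((4:ℝ)^r))
    (fun u hu => ?_) measurableSet_uIoc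
  rw [Set.uIoc_of_le (by norm_num : (-1:ℝ) ≤ 1)] at hu
  have e1 : (0:ℝ) ≤ (u + 1) * (1/2) := by linarith [hu.1]
  have e2 : (0:ℝ) ≤ 1 - (u + 1) * (1/2) := by linarith [hu.2]
  rw [← Real.mul_rpow e1 e2, ← Real.mul_rpow (by norm_num)
    (mul_nonneg e1 e2)]
  congr 1
  ring

lemma four_rpow (r : ℝ) : (4:ℝ) ^ r = 2 ^ (2 * r) := by
  have : (4:ℝ) = 2 ^ (2:ℝ) := by
    rw [show (2:ℝ) = ((2:ℕ):ℝ) from by norm_num, Real.rpow_natCast]; norm_num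
  rw [this, ← Real.rpow_mul (by norm_num)]

lemma w_int {α : ℝ} (hα : -(1/2) < α) :
    ∫ u in (-1:ℝ)..1, (1 - u^2) ^ (α - 1/2)
      = Real.sqrt π * Real.Gamma (α + 1/2) / Real.Gamma (α + 1) := by
  have ha : (0:ℝ) < α + 1/2 := by linarith
  have hb := betaInt (a := α + 1/2) (b := α + 1/2) ha ha
  norm_num at hb
  rw [w_subst, show α - 1/2 = α + 1/2 - 1 from by ring, hb, four_rpow]
  have hdup := Real.Gamma_mul_Gamma_add_half (α + 1/2)
  rw [show α + 1/2 + 1/2 = α + 1 from by ring,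
    show 2 * (α + 1/2) = α + 1/2 + (α + 1/2) from by ring] at hdup
  set A := Real.Gamma (α + 1/2) with hA
  set B := Real.Gamma (α + 1) with hB
  set C := Real.Gamma (α + 1/2 + (α + 1/2)) with hC
  set s := Real.sqrt π with hs
  set p := (2:ℝ) ^ (2 * (α + 1/2 - 1)) with hp
  set q := (2:ℝ) ^ (1 - (α + 1/2 + (α + 1/2))) with hq
  have h1 : A > 0 := Real.Gamma_pos_of_pos ha
  have h2 : B > 0 := Real.Gamma_pos_of_pos (by linarith)
  have h3 : C > 0 := Real.Gamma_pos_of_pos (by linarith)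
  have h4 : s > 0 := Real.sqrt_pos.mpr Real.pi_pos
  have h5 : p * q = 2⁻¹ := by
    rw [hp, hq, ← Real.rpow_add (by norm_num),
      show 2*(α+1/2-1) + (1-(α+1/2+(α+1/2))) = -1 from by ring]
    norm_num [Real.rpow_neg_one]
  have h6 : p > 0 := Real.rpow_pos_of_pos (by norm_num) _
  have h7 : q > 0 := Real.rpow_pos_of_pos (by norm_num) _
  have key : 2 * (p * (A * A)) * B = s * A * C := by
    have hq0 : q ≠ 0 := ne_of_gt h7
    apply mul_right_cancel₀ hq0
    calc 2 * (p * (A * A)) * B * q = 2 * (p * q) * (A * A * B) := by ring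
      _ = A * A * B := by rw [h5]; ring
      _ = A * (A * B) := by ring
      _ = A * (C * q * s) := by rw [hdup]
      _ = s * A * C * q := by ring
  field_simp
  apply mul_left_cancel₀ (ne_of_gt h1)
  linear_combination key

lemma Gamma_contAt {x : ℝ} (hx : 0 < x) : ContinuousAt Real.Gamma x := by
  refine (Real.differentiableAt_Gamma (fun m => ?_)).continuousAt
  have : (0:ℝ) ≤ m := Nat.cast_nonneg m
  intro h; rw [h] at hx; linarith

lemma cA_pos {α : ℝ} (hα : -(1/2) < α) : 0 < cA α := by
  have h1 : 0 < Real.Gamma (α + 1) := Real.Gamma_pos_of_pos (by linarith)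
  have h2 : 0 < Real.Gamma (α + 1/2) := Real.Gamma_pos_of_pos (by linarith)
  have h4 : 0 < Real.sqrt π := Real.sqrt_pos.mpr Real.pi_pos
  exact div_pos h1 (by positivity)

lemma cA_tendsto : Filter.Tendsto cA (nhdsWithin (-(1/2)) (Ioi (-(1/2)))) (nhds 0) := by
  have hg : Filter.Tendsto
      (fun α : ℝ => Real.Gamma (α + 1) * (α + 1/2) / (Real.sqrt π * Real.Gamma (α + 3/2)))
      (nhds (-(1/2))) (nhds 0) := by
    have h1 : ContinuousAt
        (fun α : ℝ => Real.Gamma (α + 1) * (α + 1/2) / (Real.sqrt π * Real.Gamma (α + 3/2)))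
        (-(1/2)) := by
      have hΓ1 : ContinuousAt (fun α : ℝ => Real.Gamma (α + 1)) (-(1/2)) := by
        refine ContinuousAt.comp (g := Real.Gamma) (f := fun α : ℝ => α + 1) ?_ (by fun_prop)
        exact Gamma_contAt (by norm_num)
      have hΓ2 : ContinuousAt (fun α : ℝ => Real.Gamma (α + 3/2)) (-(1/2)) := by
        refine ContinuousAt.comp (g := Real.Gamma) (f := fun α : ℝ => α + 3/2) ?_ (by fun_prop)
        exact Gamma_contAt (by norm_num)
      refine (hΓ1.mul ((continuous_id.add continuous_const).continuousAt)).div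
        (continuousAt_const.mul hΓ2) ?_
      have : Real.Gamma (-(1/2) + 3/2) > 0 := Real.Gamma_pos_of_pos (by norm_num)
      have h4 : 0 < Real.sqrt π := Real.sqrt_pos.mpr Real.pi_pos
      positivity
    have := h1.tendsto
    norm_num at this ⊢
    exact this
  refine (hg.mono_left nhdsWithin_le_nhds).congr' ?_
  filter_upwards [self_mem_nhdsWithin] with α (hα : -(1/2) < α)
  have hne : α + 1/2 ≠ 0 := by
    intro h; rw [show α = -(1/2) from by linarith] at hα; exact lt_irrefl _ hα
  have hΓ : Real.Gamma (α + 1/2 + 1) = (α + 1/2) * Real.Gamma (α + 1/2) := Real.Gamma_add_one hne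
  rw [show α + 3/2 = α + 1/2 + 1 from by ring, hΓ, cA]
  rw [show Real.Gamma (α+1) * (α+1/2) = (α+1/2) * Real.Gamma (α+1) from mul_comm _ _,
    show Real.sqrt π * ((α+1/2) * Real.Gamma (α+1/2))
      = (α+1/2) * (Real.sqrt π * Real.Gamma (α+1/2)) from by ring,
    mul_div_mul_left _ _ hne]

lemma w_integrableOn {r : ℝ} (hr : -1 < r) :
    IntegrableOn (fun u : ℝ => (1 - u^2) ^ r) (Icc (-1) 1) volume := by
  have h := w_integrable hr
  rw [intervalIntegrable_iff, Set.uIoc_of_le (by norm_num : (-1:ℝ) ≤ 1)] at h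
  rwa [integrableOn_Icc_iff_integrableOn_Ioc]

lemma rhoA_integrableOn {α : ℝ} (hα : -(1/2) < α) :
    IntegrableOn (rhoA α) (Icc (-1) 1) volume :=
  (w_integrableOn (by linarith : (-1:ℝ) < α - 1/2)).const_mul (cA α)

lemma icc_int_eq {g : ℝ → ℝ} :
    ∫ u in Icc (-1:ℝ) 1, g u = ∫ u in (-1:ℝ)..1, g u := by
  rw [intervalIntegral.integral_of_le (by norm_num : (-1:ℝ) ≤ 1), integral_Icc_eq_integral_Ioc]

lemma rhoA_total {α : ℝ} (hα : -(1/2) < α) : ∫ u in Icc (-1:ℝ) 1, rhoA α u = 1 := by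
  rw [icc_int_eq]
  simp only [rhoA]
  rw [intervalIntegral.integral_const_mul, w_int hα, cA]
  have h1 : 0 < Real.Gamma (α + 1) := Real.Gamma_pos_of_pos (by linarith)
  have h2 : 0 < Real.Gamma (α + 1/2) := Real.Gamma_pos_of_pos (by linarith)
  have h4 : 0 < Real.sqrt π := Real.sqrt_pos.mpr Real.pi_pos
  rw [div_mul_div_comm, mul_comm (Real.Gamma (α+1)), div_self
    (ne_of_gt (by positivity : (0:ℝ) < Real.sqrt π * Real.Gamma (α + 1/2) * Real.Gamma (α+1)))]

lemma rhoA_odd {α : ℝ} : ∫ u in Icc (-1:ℝ) 1, u * rhoA α u = 0 := by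
  rw [icc_int_eq]
  have h : (∫ x in (-1:ℝ)..1, (-x) * rhoA α (-x)) = ∫ u in (-1:ℝ)..1, u * rhoA α u := by
    simpa using intervalIntegral.integral_comp_neg (a := (-1:ℝ)) (b := 1)
      (f := fun u : ℝ => u * rhoA α u)
  have h2 : (∫ x in (-1:ℝ)..1, (-x) * rhoA α (-x)) = ∫ x in (-1:ℝ)..1, -(x * rhoA α x) :=
    intervalIntegral.integral_congr (fun x hx => by simp [rhoA, neg_sq])
  rw [intervalIntegral.integral_neg] at h2
  linarith [h, h2]

lemma rhoA_meas (α : ℝ) : Measurable (rhoA α) := by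
  unfold rhoA
  measurability

lemma piMeas_integral {α : ℝ} (hα : -(1/2) < α) (f : ℝ → ℝ) :
    ∫ u, f u ∂(PiMeas α) = ∫ u in Icc (-1:ℝ) 1, f u * rhoA α u := by
  have hne : α ≠ -(1/2) := ne_of_gt hα
  rw [PiMeas, if_neg hne]
  have hd : (fun u : ℝ => ENNReal.ofReal
      (Real.Gamma (α + 1) / (Real.sqrt π * Real.Gamma (α + 1/2)) * (1 - u ^ 2) ^ (α - 1/2)))
      = fun u => ((rhoA α u).toNNReal : ℝ≥0∞) := by
    funext u; rfl
  rw [hd, integral_withDensity_eq_integral_smul (by exact (rhoA_meas α).real_toNNReal) f]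
  refine integral_congr_ae ((ae_restrict_iff' measurableSet_Icc).mpr (ae_of_all _ fun u hu => ?_))
  have h0 : 0 ≤ rhoA α u := by
    have : (0:ℝ) ≤ 1 - u^2 := by nlinarith [hu.1, hu.2]
    exact mul_nonneg (cA_pos hα).le (Real.rpow_nonneg this _)
  simp [NNReal.smul_def, Real.coe_toNNReal _ h0, mul_comm]

lemma contOn_mul_rhoA_integrable {α : ℝ} (hα : -(1/2) < α) {F : ℝ → ℝ}
    (hF : ContinuousOn F (Icc (-1) 1)) :
    IntegrableOn (fun u => F u * rhoA α u) (Icc (-1:ℝ) 1) volume := by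
  obtain ⟨M, hM⟩ := isCompact_Icc.exists_bound_of_continuousOn hF
  exact Integrable.bdd_mul (rhoA_integrableOn hα)
    ((hF.aemeasurable measurableSet_Icc).aestronglyMeasurable)
    ((ae_restrict_iff' measurableSet_Icc).mpr (ae_of_all _ hM))

lemma mid_bound {α δ : ℝ} (hα1 : -(1/2) < α) (hα2 : α < 1/2) (hδ : 0 < δ) (hδ1 : δ ≤ 1) :
    ∫ u in Icc (-1+δ) (1-δ), rhoA α u ≤ cA α * δ⁻¹ * 2 := by
  have hCnn : 0 ≤ cA α * δ⁻¹ := mul_nonneg (cA_pos hα1).le (by positivity)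
  have hC : ∀ x ∈ Icc (-1+δ:ℝ) (1-δ), ‖rhoA α x‖ ≤ cA α * δ⁻¹ := by
    intro x hx
    have hq : δ ≤ 1 - x^2 := by nlinarith [hx.1, hx.2]
    have h1 : (1 - x^2) ^ (α - 1/2) ≤ δ ^ (α - 1/2) :=
      Real.rpow_le_rpow_of_nonpos hδ hq (by linarith)
    have h2 : δ ^ (α - 1/2) ≤ δ ^ (-1:ℝ) :=
      Real.rpow_le_rpow_of_exponent_ge hδ hδ1 (by linarith)
    rw [Real.rpow_neg hδ.le, Real.rpow_one] at h2
    have hnn : 0 ≤ rhoA α x :=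
      mul_nonneg (cA_pos hα1).le (Real.rpow_nonneg (by linarith) _)
    rw [Real.norm_eq_abs, abs_of_nonneg hnn, rhoA]
    exact mul_le_mul_of_nonneg_left (le_trans h1 h2) (cA_pos hα1).le
  have hvol : volume (Icc (-1+δ:ℝ) (1-δ)) < ⊤ := measure_Icc_lt_top
  have hnorm := norm_setIntegral_le_of_norm_le_const (μ := volume)
    (s := Icc (-1+δ:ℝ) (1-δ)) hvol hC
  have hv : (volume (Icc (-1+δ:ℝ) (1-δ))).toReal ≤ 2 := by
    rw [Real.volume_Icc, ENNReal.toReal_ofReal (by linarith)]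
    linarith
  calc ∫ u in Icc (-1+δ:ℝ) (1-δ), rhoA α u
      ≤ ‖∫ u in Icc (-1+δ:ℝ) (1-δ), rhoA α u‖ := le_abs_self _
    _ ≤ cA α * δ⁻¹ * (volume (Icc (-1+δ:ℝ) (1-δ))).toReal := hnorm
    _ ≤ cA α * δ⁻¹ * 2 := mul_le_mul_of_nonneg_left hv hCnn

end AuxWeakConv


theorem piMeas_weak_convergence (f : ℝ → ℝ) (hf : ContinuousOn f (Icc (-1 : ℝ) 1)) :
    Filter.Tendsto (fun α : ℝ => ∫ u, f u ∂(PiMeas α))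
      (nhdsWithin (-(1/2)) (Ioi (-(1/2)))) (nhds ((f (-1) + f 1) / 2)) := by
  set T : ℝ := (f (-1) + f 1) / 2 with hT
  set c₁ : ℝ := (f 1 - f (-1)) / 2 with hc₁
  set g : ℝ → ℝ := fun u => f u - (T + c₁ * u) with hgdef
  have hgcont : ContinuousOn g (Icc (-1:ℝ) 1) :=
    hf.sub (Continuous.continuousOn (by fun_prop))
  have hg1 : g 1 = 0 := by simp only [hgdef, hT, hc₁]; ring
  have hgm1 : g (-1) = 0 := by simp only [hgdef, hT, hc₁]; ring
  have key : ∀ α ∈ Ioi (-(1/2:ℝ)),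
      ∫ u, f u ∂(PiMeas α) = T + ∫ u in Icc (-1:ℝ) 1, g u * rhoA α u := by
    intro α hα
    rw [piMeas_integral hα f]
    have h1 : IntegrableOn (fun u => g u * rhoA α u) (Icc (-1:ℝ) 1) volume :=
      contOn_mul_rhoA_integrable hα hgcont
    have h2 : IntegrableOn (fun u => T * rhoA α u) (Icc (-1:ℝ) 1) volume :=
      (rhoA_integrableOn hα).const_mul T
    have h3 : IntegrableOn (fun u => c₁ * (u * rhoA α u)) (Icc (-1:ℝ) 1) volume :=
      (contOn_mul_rhoA_integrable hα continuous_id.continuousOn).const_mul c₁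
    have hsplit : ∫ u in Icc (-1:ℝ) 1, f u * rhoA α u
        = ∫ u in Icc (-1:ℝ) 1, (g u * rhoA α u + (T * rhoA α u + c₁ * (u * rhoA α u))) := by
      refine integral_congr_ae (ae_of_all _ fun u => ?_)
      simp only [hgdef]; ring
    have h23 : IntegrableOn (fun u => T * rhoA α u + c₁ * (u * rhoA α u)) (Icc (-1:ℝ) 1) volume :=
      h2.add h3
    rw [hsplit, integral_add h1 h23, integral_add h2 h3, integral_const_mul, integral_const_mul,
      rhoA_total hα, rhoA_odd]
    ring
  have hlim : Filter.Tendsto (fun α : ℝ => ∫ u in Icc (-1:ℝ) 1, g u * rhoA α u)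
      (nhdsWithin (-(1/2)) (Ioi (-(1/2)))) (nhds 0) := by
    rw [Metric.tendsto_nhds]
    intro ε hε
    obtain ⟨M, hM⟩ := isCompact_Icc.exists_bound_of_continuousOn hgcont
    have hM0 : 0 ≤ M := by
      have := hM 1 (by norm_num)
      rw [hg1] at this; simpa using this
    have hcw1 : ContinuousWithinAt g (Icc (-1:ℝ) 1) 1 := hgcont 1 (by norm_num)
    have hcwm1 : ContinuousWithinAt g (Icc (-1:ℝ) 1) (-1) := hgcont (-1) (by norm_num)
    obtain ⟨δ₁, hδ₁pos, hδ₁⟩ := Metric.continuousWithinAt_iff.mp hcw1 (ε/4) (by linarith)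
    obtain ⟨δ₂, hδ₂pos, hδ₂⟩ := Metric.continuousWithinAt_iff.mp hcwm1 (ε/4) (by linarith)
    set δ := min 1 (min δ₁ δ₂) with hδdef
    have hδpos : 0 < δ := lt_min one_pos (lt_min hδ₁pos hδ₂pos)
    have hδ1 : δ ≤ 1 := min_le_left _ _
    have hδle1 : δ ≤ δ₁ := le_trans (min_le_right _ _) (min_le_left _ _)
    have hδle2 : δ ≤ δ₂ := le_trans (min_le_right _ _) (min_le_right _ _)
    set K := M * 2 / δ with hK
    have hK0 : 0 ≤ K := by positivity
    have hev1 : ∀ᶠ α in nhdsWithin (-(1/2:ℝ)) (Ioi (-(1/2))), cA α < ε / (2 * (K+1)) := by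
      have h := Metric.tendsto_nhds.mp cA_tendsto (ε / (2*(K+1))) (by positivity)
      filter_upwards [h] with α hα
      rw [dist_zero_right, Real.norm_eq_abs] at hα
      exact lt_of_le_of_lt (le_abs_self _) hα
    have hev2 : Ioo (-(1/2:ℝ)) (1/2) ∈ nhdsWithin (-(1/2:ℝ)) (Ioi (-(1/2))) :=
      Ioo_mem_nhdsGT_of_mem (by constructor <;> norm_num)
    filter_upwards [hev1, hev2] with α hcA hαmem
    obtain ⟨hα1, hα2⟩ := hαmem
    rw [Real.dist_eq, sub_zero]
    have hρnn : ∀ u ∈ Icc (-1:ℝ) 1, 0 ≤ rhoA α u := fun u hu =>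
      mul_nonneg (cA_pos hα1).le (Real.rpow_nonneg (by nlinarith [hu.1, hu.2]) _)
    have hmidsub : Icc (-1+δ:ℝ) (1-δ) ⊆ Icc (-1:ℝ) 1 :=
      Icc_subset_Icc (by linarith) (by linarith)
    set B : ℝ → ℝ := fun u => ε/4 * rhoA α u
      + M * Set.indicator (Icc (-1+δ:ℝ) (1-δ)) (rhoA α) u with hBdef
    have hρint := rhoA_integrableOn hα1
    have hBint : Integrable B (volume.restrict (Icc (-1:ℝ) 1)) :=
      (hρint.const_mul (ε/4)).add ((hρint.indicator measurableSet_Icc).const_mul M)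
    have hbnd : ∀ᵐ u ∂(volume.restrict (Icc (-1:ℝ) 1)), ‖g u * rhoA α u‖ ≤ B u := by
      refine (ae_restrict_iff' measurableSet_Icc).mpr (ae_of_all _ fun u hu => ?_)
      have hρ := hρnn u hu
      rw [norm_mul, Real.norm_eq_abs, Real.norm_eq_abs, abs_of_nonneg hρ]
      show |g u| * rhoA α u ≤ ε/4 * rhoA α u
        + M * Set.indicator (Icc (-1+δ:ℝ) (1-δ)) (rhoA α) u
      by_cases hum : u ∈ Icc (-1+δ:ℝ) (1-δ)
      · rw [Set.indicator_of_mem hum]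
        have hgM : |g u| ≤ M := by rw [← Real.norm_eq_abs]; exact hM u hu
        nlinarith [mul_nonneg (by linarith : (0:ℝ) ≤ ε/4) hρ]
      · rw [Set.indicator_of_notMem hum, mul_zero, add_zero]
        have hgu : |g u| ≤ ε/4 := by
          rw [Set.mem_Icc, not_and_or] at hum
          push_neg at hum
          rcases hum with hlt | hlt
          · have hd : dist u (-1) < δ₂ := by
              rw [Real.dist_eq]
              rw [abs_of_nonneg (by linarith [hu.1] : (0:ℝ) ≤ u - (-1))]
              linarith
            have := hδ₂ hu hd
            rw [hgm1, dist_zero_right, Real.norm_eq_abs] at this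
            linarith
          · have hd : dist u 1 < δ₁ := by
              rw [Real.dist_eq]
              rw [abs_of_nonpos (by linarith [hu.2] : u - 1 ≤ (0:ℝ))]
              linarith
            have := hδ₁ hu hd
            rw [hg1, dist_zero_right, Real.norm_eq_abs] at this
            linarith
        exact mul_le_mul_of_nonneg_right hgu hρ
    have hIb : |∫ u in Icc (-1:ℝ) 1, g u * rhoA α u| ≤ ∫ u in Icc (-1:ℝ) 1, B u := by
      rw [← Real.norm_eq_abs]
      exact norm_integral_le_of_norm_le hBint hbnd
    have hBcalc : ∫ u in Icc (-1:ℝ) 1, B u ≤ ε/4 + K * cA α := by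
      have hint2 : Integrable (fun u => M * Set.indicator (Icc (-1+δ:ℝ) (1-δ)) (rhoA α) u)
          (volume.restrict (Icc (-1:ℝ) 1)) :=
        (hρint.indicator measurableSet_Icc).const_mul M
      rw [hBdef]
      rw [integral_add (hρint.const_mul (ε/4)) hint2, integral_const_mul, integral_const_mul,
        rhoA_total hα1, integral_indicator measurableSet_Icc,
        Measure.restrict_restrict measurableSet_Icc,
        Set.inter_eq_self_of_subset_left hmidsub]
      have hmid := mid_bound hα1 hα2 hδpos hδ1
      have : M * ∫ u in Icc (-1+δ:ℝ) (1-δ), rhoA α u ≤ M * (cA α * δ⁻¹ * 2) :=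
        mul_le_mul_of_nonneg_left hmid hM0
      have hKeq : M * (cA α * δ⁻¹ * 2) = K * cA α := by
        rw [hK]; field_simp
      nlinarith [this]
    have hKfin : K * cA α < ε/2 := by
      have h1 : K * cA α ≤ (K+1) * cA α :=
        mul_le_mul_of_nonneg_right (by linarith) (cA_pos hα1).le
      have h2 : (K+1) * cA α < (K+1) * (ε / (2*(K+1))) :=
        mul_lt_mul_of_pos_left hcA (by linarith)
      have h3 : (K+1) * (ε / (2*(K+1))) = ε/2 := by
        field_simp
      linarith
    calc |∫ u in Icc (-1:ℝ) 1, g u * rhoA α u| ≤ ∫ u in Icc (-1:ℝ) 1, B u := hIb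
      _ ≤ ε/4 + K * cA α := hBcalc
      _ < ε/4 + ε/2 := by linarith
      _ < ε := by linarith
  have hfinal := hlim.const_add T
  rw [add_zero] at hfinal
  refine hfinal.congr' ?_
  filter_upwards [self_mem_nhdsWithin] with α hα
  exact (key α hα).symm
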